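/- Let p > 3 and 0 ≤ q < p be integers, and let 1 < ε ≤ ‖(p,q)‖/2 be a real number. If (r,s) is a pair of coprime positive integers with ‖(r,s)−(p,q)‖ ≤ ε − 1, then there exists t ∈ (0,1) such that ‖((1−t)·B(r,s) + t·B(s,r)) − ((1−t)²·(p,q) + t²·(q,p))‖ < ε. -/

import Mathlib

/-- The point (x,y) in the Euclidean plane. -/
noncomputable def V (x y : ℝ) : EuclideanSpace ℝ (Fin 2) := WithLp.toLp 2 ![x, y]

lemma norm_V (x y : ℝ) : ‖V x y‖ = Real.sqrt (x^2 + y^2) := by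
  simp [V, EuclideanSpace.norm_eq, Fin.sum_univ_two, sq_abs, Real.norm_eq_abs]

lemma V_sub (x y x' y' : ℝ) : V x y - V x' y' = V (x - x') (y - y') := by
  ext i; fin_cases i <;> simp [V]

lemma norm_V_swap (x y : ℝ) : ‖V x y‖ = ‖V y x‖ := by
  rw [norm_V, norm_V, add_comm]

lemma key (p q r s a b c d : ℤ) (ε : ℝ) (hε1 : 1 < ε)
    (hr : 0 < r) (ha : 0 < a) (har : a < r)
    (had : a + d = r) (hbc : b + c = s)
    (hbez : a * s - b * r = 1)
    (hclose : ‖V (r : ℝ) (s : ℝ) - V (p : ℝ) (q : ℝ)‖ ≤ ε - 1) :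
    ∃ t : ℝ, 0 < t ∧ t < 1 ∧
      ‖((1 - t) • V (a : ℝ) (b : ℝ) + t • V (c : ℝ) (d : ℝ)) -
          ((1 - t) ^ 2 • V (p : ℝ) (q : ℝ) + t ^ 2 • V (q : ℝ) (p : ℝ))‖ < ε := by
  have hR : (0:ℝ) < (r:ℝ) := by exact_mod_cast hr
  have hR1 : (1:ℝ) ≤ (r:ℝ) := by exact_mod_cast hr
  have hA : (0:ℝ) < (a:ℝ) := by exact_mod_cast ha
  have hAR : (a:ℝ) < (r:ℝ) := by exact_mod_cast har
  have hD : (d:ℝ) = (r:ℝ) - (a:ℝ) := by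
    have : ((a:ℝ)) + d = r := by exact_mod_cast had
    linarith
  have hC : (c:ℝ) = (s:ℝ) - (b:ℝ) := by
    have : ((b:ℝ)) + c = s := by exact_mod_cast hbc
    linarith
  have hbezR : (a:ℝ) * s - (b:ℝ) * r = 1 := by exact_mod_cast hbez
  set t : ℝ := ((r:ℝ) - a) / r with ht
  refine ⟨t, div_pos (by linarith) hR, (div_lt_one hR).2 (by linarith), ?_⟩
  have hid : ((1 - t) • V (a : ℝ) (b : ℝ) + t • V (c : ℝ) (d : ℝ)) -
          ((1 - t) ^ 2 • V (p : ℝ) (q : ℝ) + t ^ 2 • V (q : ℝ) (p : ℝ))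
      = V (((r:ℝ)-a)/(r:ℝ)^2) (-(a:ℝ)/(r:ℝ)^2)
        + ((1 - t) ^ 2 • (V (r:ℝ) (s:ℝ) - V (p:ℝ) (q:ℝ))
            + t ^ 2 • (V (s:ℝ) (r:ℝ) - V (q:ℝ) (p:ℝ))) := by
    have hRne : ((r:ℝ)) ≠ 0 := ne_of_gt hR
    ext i
    fin_cases i
    · simp [V, ht, hC, hD]
      field_simp
      linear_combination ((r:ℝ) - a) * hbezR
    · simp [V, ht, hC, hD]
      field_simp
      linear_combination (-(a:ℝ)) * hbezR
  rw [hid]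
  have ht0 : 0 < t := div_pos (by linarith) hR
  have ht1 : t < 1 := (div_lt_one hR).2 (by linarith)
  have h1 : ‖V (((r:ℝ)-a)/(r:ℝ)^2) (-(a:ℝ)/(r:ℝ)^2)‖ ≤ 1 := by
    rw [norm_V]
    have hle : (((r:ℝ)-a)/(r:ℝ)^2)^2 + (-(a:ℝ)/(r:ℝ)^2)^2 ≤ 1 := by
      rw [div_pow, div_pow, ← add_div, div_le_one (by positivity)]
      nlinarith [mul_pos hA (sub_pos.2 hAR), sq_nonneg ((r:ℝ)^2 - 1)]
    calc Real.sqrt _ ≤ Real.sqrt 1 := Real.sqrt_le_sqrt hle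
    _ = 1 := Real.sqrt_one
  have h2 : ‖V (s:ℝ) (r:ℝ) - V (q:ℝ) (p:ℝ)‖ ≤ ε - 1 := by
    rw [V_sub, norm_V_swap, ← V_sub]; exact hclose
  have htt : (1-t)^2 + t^2 < 1 := by nlinarith [mul_pos ht0 (sub_pos.2 ht1)]
  have hε0 : (0:ℝ) ≤ ε - 1 := by linarith
  calc ‖_ + ((1 - t) ^ 2 • (V (r:ℝ) (s:ℝ) - V (p:ℝ) (q:ℝ))
            + t ^ 2 • (V (s:ℝ) (r:ℝ) - V (q:ℝ) (p:ℝ)))‖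
      ≤ ‖V (((r:ℝ)-a)/(r:ℝ)^2) (-(a:ℝ)/(r:ℝ)^2)‖
        + (‖(1 - t) ^ 2 • (V (r:ℝ) (s:ℝ) - V (p:ℝ) (q:ℝ))‖
            + ‖t ^ 2 • (V (s:ℝ) (r:ℝ) - V (q:ℝ) (p:ℝ))‖) :=
        le_trans (norm_add_le _ _) (by gcongr; exact norm_add_le _ _)
    _ ≤ 1 + ((1-t)^2 * (ε-1) + t^2 * (ε-1)) := by
        gcongr
        · rw [norm_smul, Real.norm_eq_abs, abs_of_nonneg (by positivity)]
          exact mul_le_mul_of_nonneg_left hclose (by positivity)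
        · rw [norm_smul, Real.norm_eq_abs, abs_of_nonneg (by positivity)]
          exact mul_le_mul_of_nonneg_left h2 (by positivity)
    _ < ε := by nlinarith
/-- the Bézier–Bézout segment of (r,s) comes within ε of the
quadratic Bézier curve for (p,q), (0,0), (q,p) at some parameter t ∈ (0,1).
Here (a,b) = B(r,s) and (c,d) = B(s,r). -/
theorem bezout_segment_approx_bezier (p q r s a b c d : ℤ)
    (hp : 3 < p) (hq0 : 0 ≤ q) (hqp : q < p)
    (ε : ℝ) (hε1 : 1 < ε) (hε2 : ε ≤ ‖V (p : ℝ) (q : ℝ)‖ / 2)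
    (hr : 0 < r) (hs : 0 < s) (hrs : IsCoprime r s)
    (ha : 0 < a) (har : a ≤ r) (hb : 0 ≤ b) (hbs : b < s)
    (hbez : a * s - b * r = 1)
    (hc : 0 < c) (hcs : c ≤ s) (hd : 0 ≤ d) (hdr : d < r)
    (hbez' : c * r - d * s = 1)
    (hclose : ‖V (r : ℝ) (s : ℝ) - V (p : ℝ) (q : ℝ)‖ ≤ ε - 1) :
    ∃ t : ℝ, 0 < t ∧ t < 1 ∧
      ‖((1 - t) • V (a : ℝ) (b : ℝ) + t • V (c : ℝ) (d : ℝ)) -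
          ((1 - t) ^ 2 • V (p : ℝ) (q : ℝ) + t ^ 2 • V (q : ℝ) (p : ℝ))‖ < ε := by
  -- derive a + d = r and b + c = s
  have h1 : (a + d) * s = r * (b + c) := by linarith
  have hdvd : r ∣ (a + d) := hrs.dvd_of_dvd_mul_right ⟨b + c, h1⟩
  obtain ⟨k, hk⟩ := hdvd
  have hk1 : k = 1 := by nlinarith
  have had : a + d = r := by rw [hk1, mul_one] at hk; exact hk
  have hbc : b + c = s := by
    have : r * s = r * (b + c) := by nlinarith
    exact (mul_left_cancel₀ (by omega) this).symm
  rcases lt_or_ge 1 r with hr2 | hr1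
  · -- r ≥ 2 : a < r
    have har' : a < r := by
      rcases lt_or_eq_of_le har with h | h
      · exact h
      · exfalso
        have : r ∣ 1 := ⟨s - b, by rw [← hbez, h]; ring⟩
        have := Int.le_of_dvd one_pos this
        omega
    exact key p q r s a b c d ε hε1 hr ha har' had hbc hbez hclose
  · -- r = 1
    have hr1' : r = 1 := by omega
    rcases lt_or_ge 1 s with hs2 | hs1
    · -- s ≥ 2 : c < s, apply swapped key
      have hcs' : c < s := by
        rcases lt_or_eq_of_le hcs with h | h
        · exact h
        · exfalso
          have : s ∣ 1 := ⟨r - d, by rw [← hbez', h]; ring⟩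
          have := Int.le_of_dvd one_pos this
          omega
      have hclose' : ‖V (s : ℝ) (r : ℝ) - V (q : ℝ) (p : ℝ)‖ ≤ ε - 1 := by
        rw [V_sub, norm_V_swap, ← V_sub]; exact hclose
      obtain ⟨t', ht0, ht1, hlt⟩ :=
        key q p s r c d a b ε hε1 hs hc hcs' (by omega) (by omega) hbez' hclose'
      refine ⟨1 - t', by linarith, by linarith, ?_⟩
      have hveq : ((1 - (1 - t')) • V (a : ℝ) (b : ℝ) + (1 - t') • V (c : ℝ) (d : ℝ)) -
          ((1 - (1 - t')) ^ 2 • V (p : ℝ) (q : ℝ) + (1 - t') ^ 2 • V (q : ℝ) (p : ℝ))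
          = ((1 - t') • V (c : ℝ) (d : ℝ) + t' • V (a : ℝ) (b : ℝ)) -
          ((1 - t') ^ 2 • V (q : ℝ) (p : ℝ) + t' ^ 2 • V (p : ℝ) (q : ℝ)) := by
        have e1 : (1 : ℝ) - (1 - t') = t' := by ring
        rw [e1]; abel
      rw [hveq]; exact hlt
    · -- r = s = 1 : contradiction
      exfalso
      have hs1' : s = 1 := by omega
      have hP4 : (4:ℝ) ≤ (p:ℝ) := by exact_mod_cast hp
      have hN : (p:ℝ) ≤ ‖V (p:ℝ) (q:ℝ)‖ := by
        rw [norm_V]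
        calc (p:ℝ) = Real.sqrt ((p:ℝ)^2) := (Real.sqrt_sq (by linarith)).symm
          _ ≤ Real.sqrt ((p:ℝ)^2 + (q:ℝ)^2) := Real.sqrt_le_sqrt (by nlinarith)
      have h11 : ‖V (r:ℝ) (s:ℝ)‖ ≤ 3/2 := by
        rw [hr1', hs1', norm_V]
        push_cast
        calc Real.sqrt ((1:ℝ)^2 + (1:ℝ)^2) ≤ Real.sqrt ((3/2:ℝ)^2) :=
            Real.sqrt_le_sqrt (by norm_num)
          _ = 3/2 := Real.sqrt_sq (by norm_num)
      have htri : ‖V (p:ℝ) (q:ℝ)‖ ≤ ‖V (r:ℝ) (s:ℝ) - V (p:ℝ) (q:ℝ)‖ + ‖V (r:ℝ) (s:ℝ)‖ := by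
        have := norm_sub_le (V (r:ℝ) (s:ℝ) - V (p:ℝ) (q:ℝ)) (V (r:ℝ) (s:ℝ))
        simpa using this
      linarith
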